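/- Let A ∈ ℝ^{n×n}, B^m ∈ ℝ^{n×m}, B^p ∈ ℝ^{n×r}, C ∈ ℝ^{p×n}, and let E, F, L, H satisfy the decoupling conditions F = (I − H C) B^m, (I − H C) B^p = 0, and E = (I − H C) A − (L − E H) C. Let x, z : ℝ → ℝ^n be differentiable, let u : ℝ → ℝ^m, w : ℝ → ℝ^r, c : ℝ → ℝ^n be functions, and suppose that for all t: ẋ(t) = A x(t) + B^m u(t) + B^p w(t) and ż(t) = E z(t) + F u(t) + L C x(t) + c(t). Define the estimate x̂(t) := z(t) + H C x(t) and the error e(t) := x(t) − x̂(t). Then for all t, e is differentiable with ė(t) = E e(t) − c(t); in particular the error dynamics is decoupled from x, u, and w. -/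

import Mathlib

open Matrix

/-- Error-dynamics decoupling for a single node of the unknown-input observer:
if the decoupling conditions hold, then the error `e = x − (z + HCx)` satisfies
`ė = E e − c`, independently of `x`, `u` and `w`. -/
theorem stmt5 {n m r p : ℕ} (A : Matrix (Fin n) (Fin n) ℝ)
    (Bm : Matrix (Fin n) (Fin m) ℝ) (Bp : Matrix (Fin n) (Fin r) ℝ)
    (C : Matrix (Fin p) (Fin n) ℝ)
    (E : Matrix (Fin n) (Fin n) ℝ) (F : Matrix (Fin n) (Fin m) ℝ)
    (L H : Matrix (Fin n) (Fin p) ℝ)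
    (hF : F = (1 - H * C) * Bm)
    (hBp : (1 - H * C) * Bp = 0)
    (hE : E = (1 - H * C) * A - (L - E * H) * C)
    (x z : ℝ → Fin n → ℝ)
    (u : ℝ → Fin m → ℝ) (w : ℝ → Fin r → ℝ) (c : ℝ → Fin n → ℝ)
    (hx : ∀ t, HasDerivAt x (A *ᵥ x t + Bm *ᵥ u t + Bp *ᵥ w t) t)
    (hz : ∀ t, HasDerivAt z (E *ᵥ z t + F *ᵥ u t + L *ᵥ (C *ᵥ x t) + c t) t) :
    ∀ t, HasDerivAt (fun s => x s - (z s + H *ᵥ (C *ᵥ x s)))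
      (E *ᵥ (x t - (z t + H *ᵥ (C *ᵥ x t))) - c t) t := by
  intro t
  have hHC : HasDerivAt (fun s => H *ᵥ (C *ᵥ x s))
      (H *ᵥ (C *ᵥ (A *ᵥ x t + Bm *ᵥ u t + Bp *ᵥ w t))) t := by
    have h := ((Matrix.mulVecLin (H * C)).toContinuousLinearMap.hasFDerivAt.comp_hasDerivAt
      t (hx t))
    simp only [Function.comp_def, ContinuousLinearMap.coe_coe,
      LinearMap.coe_toContinuousLinearMap, Matrix.mulVecLin_apply,
      LinearMap.coe_toContinuousLinearMap', ← Matrix.mulVec_mulVec] at h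
    exact h
  have hd := (hx t).sub ((hz t).add hHC)
  convert hd using 1
  case e'_4 | e'_5 | e'_6 | e'_8 => rfl
  have h2 : ((1 - H * C) * A - L * C) + E * H * C = E := by
    nth_rewrite 2 [hE]
    simp only [Matrix.sub_mul, Matrix.one_mul]
    abel
  have hBp' : H * C * Bp = Bp := by
    have h := hBp
    rw [Matrix.sub_mul, Matrix.one_mul, sub_eq_zero] at h
    exact h.symm
  simp only [Matrix.mulVec_add, Matrix.mulVec_sub, Matrix.mulVec_mulVec, ← Matrix.mul_assoc,
    eq_sub_of_add_eq' h2, hF, hBp',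
    Matrix.sub_mul, Matrix.one_mul, Matrix.sub_mulVec, Matrix.add_mulVec]
  abel
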